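/- For s = 2 blocks with Q = [[Q11, Q12],[Q12^*, Q22]], Q11, Q22 symmetric positive definite, and x̄ = (x̄1, x̄2) given: if x2' = Q22^{-1}(b2 − Q12^* x̄1), x1^+ = argmin_{x1} { p(x1) + q(x1, x2') } and x2^+ = Q22^{-1}(b2 − Q12^* x1^+), then (x1^+, x2^+) is the unique minimizer of p(x1) + q(x) + (1/2)‖x − x̄‖²_T, where q(x) = (1/2)⟨x, Qx⟩ − ⟨b, x⟩ and T = Q12 Q22^{-1} Q12^*. -/

import Mathlib

open Matrix

theorem stmt12 {n1 n2 : ℕ}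
    (Q11 : Matrix (Fin n1) (Fin n1) ℝ) (Q12 : Matrix (Fin n1) (Fin n2) ℝ)
    (Q22 : Matrix (Fin n2) (Fin n2) ℝ)
    (hQ : (Matrix.fromBlocks Q11 Q12 Q12ᵀ Q22).PosSemidef)
    (hQ11 : Q11.PosDef) (hQ22 : Q22.PosDef)
    (p : (Fin n1 → ℝ) → ℝ) (hp : ConvexOn ℝ Set.univ p)
    (hpc : LowerSemicontinuous p)
    (b1 : Fin n1 → ℝ) (b2 : Fin n2 → ℝ)
    (xbar1 : Fin n1 → ℝ) (xbar2 : Fin n2 → ℝ)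
    (q : (Fin n1 → ℝ) → (Fin n2 → ℝ) → ℝ)
    (hq : ∀ x1 x2, q x1 x2 =
      (1/2) * (x1 ⬝ᵥ (Q11 *ᵥ x1 + Q12 *ᵥ x2) + x2 ⬝ᵥ (Q12ᵀ *ᵥ x1 + Q22 *ᵥ x2))
        - b1 ⬝ᵥ x1 - b2 ⬝ᵥ x2)
    (x2' : Fin n2 → ℝ) (hx2' : x2' = Q22⁻¹ *ᵥ (b2 - Q12ᵀ *ᵥ xbar1))
    (x1p : Fin n1 → ℝ) (hx1p : ∀ y, p x1p + q x1p x2' ≤ p y + q y x2')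
    (x2p : Fin n2 → ℝ) (hx2p : x2p = Q22⁻¹ *ᵥ (b2 - Q12ᵀ *ᵥ x1p))
    (G : (Fin n1 → ℝ) × (Fin n2 → ℝ) → ℝ)
    (hG : ∀ z, G z = p z.1 + q z.1 z.2 +
      (1/2) * ((z.1 - xbar1) ⬝ᵥ ((Q12 * Q22⁻¹ * Q12ᵀ) *ᵥ (z.1 - xbar1)))) :
    (∀ z, G (x1p, x2p) ≤ G z) ∧ (∀ z, (∀ w, G z ≤ G w) → z = (x1p, x2p)) := by
  have hQ22s : Q22ᵀ = Q22 := hQ22.1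
  have hQ11s : Q11ᵀ = Q11 := hQ11.1
  have hdet : IsUnit Q22.det := isUnit_iff_ne_zero.mpr hQ22.det_pos.ne'
  have hQi : Q22 * Q22⁻¹ = 1 := Matrix.mul_nonsing_inv _ hdet
  have hQis : (Q22⁻¹)ᵀ = Q22⁻¹ := by
    rw [Matrix.transpose_nonsing_inv, hQ22s]
  have swap : ∀ {m k : ℕ} (M : Matrix (Fin m) (Fin k) ℝ) (a : Fin m → ℝ) (c : Fin k → ℝ),
      a ⬝ᵥ (M *ᵥ c) = c ⬝ᵥ (Mᵀ *ᵥ a) := by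
    intro m k M a c
    rw [Matrix.dotProduct_mulVec, ← Matrix.mulVec_transpose, dotProduct_comm]
  set s : (Fin n1 → ℝ) → Fin n2 → ℝ := fun y => Q22⁻¹ *ᵥ (b2 - Q12ᵀ *ᵥ y) with hs_def
  have hs : ∀ y, Q22 *ᵥ s y = b2 - Q12ᵀ *ᵥ y := by
    intro y
    rw [hs_def]
    rw [Matrix.mulVec_mulVec, hQi, Matrix.one_mulVec]
  -- L1
  have L1 : ∀ y1 z2, q y1 z2 = q y1 (s y1)
      + (1/2) * ((z2 - s y1) ⬝ᵥ Q22 *ᵥ (z2 - s y1)) := by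
    intro y1 z2
    have hw := hs y1
    rw [hq, hq]
    simp only [Matrix.mulVec_sub, sub_dotProduct, dotProduct_sub,
      dotProduct_add, add_dotProduct]
    rw [swap Q22 (s y1) z2, hQ22s]
    simp only [hw, dotProduct_sub]
    rw [swap Q12 y1 z2, swap Q12 y1 (s y1),
      dotProduct_comm z2 b2, dotProduct_comm (s y1) b2]
    ring
  -- L3
  have L3 : ∀ y1, (x2' - s y1) ⬝ᵥ Q22 *ᵥ (x2' - s y1)
      = (y1 - xbar1) ⬝ᵥ ((Q12 * Q22⁻¹ * Q12ᵀ) *ᵥ (y1 - xbar1)) := by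
    intro y1
    have hd : x2' - s y1 = Q22⁻¹ *ᵥ (Q12ᵀ *ᵥ (y1 - xbar1)) := by
      rw [hx2', hs_def]
      simp only [Matrix.mulVec_sub]
      abel
    rw [hd]
    have hQv : Q22 *ᵥ (Q22⁻¹ *ᵥ (Q12ᵀ *ᵥ (y1 - xbar1))) = Q12ᵀ *ᵥ (y1 - xbar1) := by
      rw [Matrix.mulVec_mulVec _ Q22 Q22⁻¹, hQi, Matrix.one_mulVec]
    have hT : (Q12 * Q22⁻¹ * Q12ᵀ) *ᵥ (y1 - xbar1)
        = Q12 *ᵥ (Q22⁻¹ *ᵥ (Q12ᵀ *ᵥ (y1 - xbar1))) := by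
      simp only [Matrix.mulVec_mulVec, Matrix.mul_assoc]
    rw [hQv, hT, swap Q12 (y1 - xbar1) (Q22⁻¹ *ᵥ (Q12ᵀ *ᵥ (y1 - xbar1)))]
  -- key identity
  have key : ∀ z1 z2, G (z1, z2) = p z1 + q z1 x2'
      + (1/2) * ((z2 - s z1) ⬝ᵥ Q22 *ᵥ (z2 - s z1)) := by
    intro z1 z2
    rw [hG]
    simp only
    rw [L1 z1 z2, L1 z1 x2', L3 z1]
    ring
  have hsx1p : x2p = s x1p := by rw [hx2p, hs_def]
  have hG0 : G (x1p, x2p) = p x1p + q x1p x2' := by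
    rw [key x1p x2p, hsx1p]
    simp
  have hnn : ∀ u : Fin n2 → ℝ, 0 ≤ u ⬝ᵥ Q22 *ᵥ u := by
    intro u
    simpa using hQ22.posSemidef.dotProduct_mulVec_nonneg u
  have hmin : ∀ z, G (x1p, x2p) ≤ G z := by
    intro z
    have hk := key z.1 z.2
    rw [Prod.mk.eta] at hk
    rw [hG0, hk]
    have h1 := hx1p z.1
    have h2 := hnn (z.2 - s z.1)
    linarith
  refine ⟨hmin, ?_⟩
  intro z hz
  have hk := key z.1 z.2
  rw [Prod.mk.eta] at hk
  have h1 : G z ≤ G (x1p, x2p) := hz _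
  have h2 := hx1p z.1
  have h3 := hnn (z.2 - s z.1)
  -- (z.2 - s z.1) quadratic is 0
  have hu0 : z.2 - s z.1 = 0 := by
    by_contra hne
    have := hQ22.dotProduct_mulVec_pos (x := z.2 - s z.1) ?_
    · have hpos : 0 < (z.2 - s z.1) ⬝ᵥ Q22 *ᵥ (z.2 - s z.1) := by simpa using this
      rw [hk, hG0] at h1
      linarith
    · exact hne
  have hz2 : z.2 = s z.1 := sub_eq_zero.mp hu0
  have heq : p z.1 + q z.1 x2' ≤ p x1p + q x1p x2' := by
    rw [hk, hG0, hu0] at h1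
    simpa using h1
  -- strict convexity argument for z.1 = x1p
  have hz1 : z.1 = x1p := by
    by_contra hne
    set m := (1/2 : ℝ) • (z.1 + x1p) with hm
    have hconv : p m ≤ (1/2) * p z.1 + (1/2) * p x1p := by
      have := hp.2 (Set.mem_univ z.1) (Set.mem_univ x1p)
        (by norm_num : (0:ℝ) ≤ 1/2) (by norm_num : (0:ℝ) ≤ 1/2) (by norm_num)
      simpa [hm, smul_add, smul_eq_mul] using this
    have hquad : q m x2' = (1/2) * q z.1 x2' + (1/2) * q x1p x2'
        - (1/8) * ((z.1 - x1p) ⬝ᵥ Q11 *ᵥ (z.1 - x1p)) := by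
      rw [hq, hq, hq, hm]
      simp only [smul_add, Matrix.mulVec_add, Matrix.mulVec_smul, Matrix.mulVec_sub,
        smul_dotProduct, dotProduct_smul, add_dotProduct,
        dotProduct_add, sub_dotProduct, dotProduct_sub,
        smul_eq_mul]
      rw [swap Q11 z.1 x1p, hQ11s]
      ring
    have hδ : 0 < (z.1 - x1p) ⬝ᵥ Q11 *ᵥ (z.1 - x1p) := by
      have hne' : z.1 - x1p ≠ 0 := sub_ne_zero.mpr hne
      simpa using hQ11.dotProduct_mulVec_pos hne'
    have hmle := hx1p m
    nlinarith [hmle, hconv, hquad, heq, hδ]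
  refine Prod.ext hz1 ?_
  rw [hz2, hz1, hsx1p]
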